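/- Let W be a nonempty countable subset of the positive reals and L a finite set of labels with |L| ≥ 2, fix l₀ ∈ L, and let 𝒴 be the set of strings of ⟨W,L⟩ with at least two runs whose first run has label l₀ and whose subsequent runs all have labels different from l₀. Suppose C > 0 satisfies (|L|−1)·G_W(C) = 1, where G_W(s) = Σ_{ν∈W} exp(−ν·s), and suppose Σ_{y∈𝒴} exp(−w(y)·C)·w(y) < ∞. Let Y₁, Y₂, … be independent and identically distributed with values in 𝒴 and common PMF p_Y(y) = exp(−w(y)·C). Then Y is an input process of ⟨W,L⟩ — i.e., the supports X_k = {y₁ ++ ⋯ ++ y_k | p_Y(y₁)⋯p_Y(y_k) > 0} satisfy ⋃_{k≥1} X_k ⊆ ⟨W,L⟩ and X_j ∩ X_k = ∅ for j ≠ k — and its entropy rate limsup_{k→∞} H(Y₁,…,Y_k)/E[w(Y₁)+⋯+w(Y_k)] equals C. -/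

import Mathlib

open scoped ENNReal

/-- A string of the general run-length set `⟨W,L⟩`: a nonempty finite sequence of runs
`(ν, l) ∈ W × L` in which any two consecutive runs carry distinct labels. -/
def IsRLString {L : Type*} (W : Set ℝ) (a : List (ℝ × L)) : Prop :=
  a ≠ [] ∧ (∀ r ∈ a, r.1 ∈ W) ∧ a.Chain' fun p q => p.2 ≠ q.2

/-- The weight of a string: the sum of its run-lengths. -/
def rlWeight {L : Type*} (a : List (ℝ × L)) : ℝ :=
  (a.map Prod.fst).sum

/-- `G_W(s) = ∑_{ν ∈ W} exp(-ν·s)`, valued in `[0,∞]`. -/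
noncomputable def GW (W : Set ℝ) (s : ℝ) : ℝ≥0∞ :=
  ∑' ν : W, ENNReal.ofReal (Real.exp (-(ν : ℝ) * s))

/-- Membership in the set `𝒴`: a string of `⟨W,L⟩` with at least two runs, whose first
run carries the label `l₀` and all of whose subsequent runs carry labels different
from `l₀`. -/
def MemY {L : Type*} (W : Set ℝ) (l₀ : L) (a : List (ℝ × L)) : Prop :=
  IsRLString W a ∧
    ∃ r rest, a = r :: rest ∧ r.2 = l₀ ∧ rest ≠ [] ∧ ∀ q ∈ rest, q.2 ≠ l₀

open Filter

/- ### Auxiliary lemmas -/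

lemma aux_sum_le_prod_one_add {ι : Type*} (s : Finset ι) (f : ι → ℝ) (hf : ∀ i, 0 ≤ f i) :
    ∑ i ∈ s, f i ≤ ∏ i ∈ s, (1 + f i) := by
  classical
  have h : 1 + ∑ i ∈ s, f i ≤ ∏ i ∈ s, (1 + f i) := by
    induction s using Finset.induction with
    | empty => simp
    | @insert a s hx ih =>
      rw [Finset.sum_insert hx, Finset.prod_insert hx]
      have h1 : 0 ≤ ∑ i ∈ s, f i := Finset.sum_nonneg fun i _ => hf i
      nlinarith [hf a, ih]
  linarith

lemma aux_summable_pi_prod {Y : Type*} {q : Y → ℝ} (hq : Summable q) (hq0 : ∀ y, 0 ≤ q y) :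
    ∀ n : ℕ, Summable fun yv : Fin n → Y => ∏ i, q (yv i) := by
  intro n
  induction n with
  | zero =>
    have : (fun yv : Fin 0 → Y => ∏ i, q (yv i)) = fun _ => 1 := by funext; simp
    rw [this]; exact Summable.of_finite
  | succ n ih =>
    have h1 : (0 : Y → ℝ) ≤ q := fun y => hq0 y
    have h2 : (0 : (Fin n → Y) → ℝ) ≤ fun yv => ∏ i, q (yv i) :=
      fun yv => Finset.prod_nonneg fun i _ => hq0 _
    have key : Summable fun p : Y × (Fin n → Y) => q p.1 * ∏ i, q (p.2 i) :=
      Summable.mul_of_nonneg (f := q) (g := fun yv : Fin n → Y => ∏ i, q (yv i)) hq ih h1 h2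
    have heq : (fun yv : Fin (n+1) → Y => ∏ i, q (yv i)) ∘ (Fin.consEquiv fun _ => Y)
        = fun p : Y × (Fin n → Y) => q p.1 * ∏ i, q (p.2 i) := by
      funext p
      simp [Fin.consEquiv, Fin.prod_univ_succ]
    exact ((Fin.consEquiv fun _ => Y).summable_iff).1 (heq ▸ key)

lemma aux_summable_prod_mul_sum {Y : Type*} {p w : Y → ℝ}
    (hp : ∀ y, 0 < p y) (hw : ∀ y, 0 < w y)
    (hq : Summable fun y => p y * (1 + w y)) (n : ℕ) :
    Summable fun yv : Fin n → Y => (∏ i, p (yv i)) * ∑ i, w (yv i) := by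
  have hq0 : ∀ y, 0 ≤ p y * (1 + w y) := fun y =>
    mul_nonneg (hp y).le (by nlinarith [hw y])
  refine Summable.of_nonneg_of_le ?_ ?_ (aux_summable_pi_prod hq hq0 n)
  · intro yv
    exact mul_nonneg (Finset.prod_nonneg fun i _ => (hp _).le)
      (Finset.sum_nonneg fun i _ => (hw _).le)
  · intro yv
    have h1 : ∑ i, w (yv i) ≤ ∏ i, (1 + w (yv i)) :=
      aux_sum_le_prod_one_add _ _ fun i => (hw _).le
    calc (∏ i, p (yv i)) * ∑ i, w (yv i)
        ≤ (∏ i, p (yv i)) * ∏ i, (1 + w (yv i)) := by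
          apply mul_le_mul_of_nonneg_left h1
          exact Finset.prod_nonneg fun i _ => (hp _).le
      _ = ∏ i, p (yv i) * (1 + w (yv i)) := by rw [← Finset.prod_mul_distrib]

lemma aux_memY_getLast? {L : Type*} {W : Set ℝ} {l₀ : L} {a : List (ℝ × L)}
    (h : MemY W l₀ a) : ∀ x ∈ a.getLast?, x.2 ≠ l₀ := by
  obtain ⟨_, r, rest, rfl, hr, hrest, hall⟩ := h
  intro x hx
  obtain ⟨hne, rfl⟩ := List.mem_getLast?_eq_getLast hx
  rw [List.getLast_cons hrest]
  exact hall _ (List.getLast_mem hrest)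

lemma aux_memY_head? {L : Type*} {W : Set ℝ} {l₀ : L} {a : List (ℝ × L)}
    (h : MemY W l₀ a) : ∀ x ∈ a.head?, x.2 = l₀ := by
  obtain ⟨_, r, rest, rfl, hr, hrest, hall⟩ := h
  intro x hx
  rw [List.head?_cons, Option.mem_some_iff] at hx
  exact hx ▸ hr

lemma aux_memY_mem_le_weight {L : Type*} {W : Set ℝ} (hWpos : ∀ ν ∈ W, 0 < ν)
    {l₀ : L} {a : List (ℝ × L)} (h : MemY W l₀ a) :
    ∀ x ∈ a, x.1 ≤ rlWeight a := by
  intro x hx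
  apply List.single_le_sum (l := a.map Prod.fst)
  · intro v hv
    rw [List.mem_map] at hv
    obtain ⟨r, hr, rfl⟩ := hv
    exact (hWpos _ (h.1.2.1 r hr)).le
  · exact List.mem_map_of_mem hx

lemma aux_memY_weight_pos {L : Type*} {W : Set ℝ} (hWpos : ∀ ν ∈ W, 0 < ν)
    {l₀ : L} {a : List (ℝ × L)} (h : MemY W l₀ a) : 0 < rlWeight a := by
  obtain ⟨r, rest, ha, -, -, -⟩ := h.2
  have hr : r ∈ a := by rw [ha]; exact List.mem_cons_self
  have h1 : 0 < r.1 := hWpos _ (h.1.2.1 r hr)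
  exact lt_of_lt_of_le h1 (aux_memY_mem_le_weight hWpos h r hr)

/-- **The maxentropic input process of `⟨W,L⟩`**: if `C > 0` solves `(|L|-1)·G_W(C) = 1`
and the expected weight `∑_{y∈𝒴} exp(-w(y)·C)·w(y)` is finite, then the IID process
`Y₁, Y₂, …` with values in `𝒴` and common PMF `p_Y(y) = exp(-w(y)·C)` is an input process
of `⟨W,L⟩` (its supports `X_k` satisfy `⋃_{k≥1} X_k ⊆ ⟨W,L⟩` and `X_j ∩ X_k = ∅` for
`j ≠ k`), and its entropy rate equals `C`. -/
theorem maxentropic_input_process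
    {L : Type*} [Fintype L] (hL : 2 ≤ Fintype.card L)
    (W : Set ℝ) (hWne : W.Nonempty) (hWc : W.Countable) (hWpos : ∀ ν ∈ W, 0 < ν)
    (l₀ : L)
    (C : ℝ) (hC : 0 < C)
    (hCeq : ((Fintype.card L : ℝ≥0∞) - 1) * GW W C = 1)
    (hfin : Summable fun y : {a : List (ℝ × L) // MemY W l₀ a} =>
      Real.exp (-rlWeight (y : List (ℝ × L)) * C) * rlWeight (y : List (ℝ × L)))
    (pY : {a : List (ℝ × L) // MemY W l₀ a} → ℝ)
    (hpY : ∀ y, pY y = Real.exp (-rlWeight (y : List (ℝ × L)) * C))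
    (X : ℕ → Set (List (ℝ × L)))
    (hX : ∀ k, X k = {x | ∃ yv : Fin k → {a : List (ℝ × L) // MemY W l₀ a},
      0 < ∏ i, pY (yv i) ∧ x = (List.ofFn fun i => ((yv i : List (ℝ × L)))).flatten}) :
    ((⋃ k : ℕ, X (k + 1)) ⊆ {a : List (ℝ × L) | IsRLString W a}) ∧
    (∀ j k, 1 ≤ j → 1 ≤ k → j ≠ k → X j ∩ X k = ∅) ∧
    limsup (fun k : ℕ =>
      (∑' yv : Fin (k + 1) → {a : List (ℝ × L) // MemY W l₀ a},
        -((∏ i, pY (yv i)) * Real.log (∏ i, pY (yv i)))) /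
      (∑' yv : Fin (k + 1) → {a : List (ℝ × L) // MemY W l₀ a},
        (∏ i, pY (yv i)) * ∑ i, rlWeight ((yv i : List (ℝ × L))))) atTop = C := by
  classical
  have hpos : ∀ y : {a : List (ℝ × L) // MemY W l₀ a}, 0 < pY y :=
    fun y => by rw [hpY]; exact Real.exp_pos _
  have hwpos : ∀ y : {a : List (ℝ × L) // MemY W l₀ a}, 0 < rlWeight (y : List (ℝ × L)) :=
    fun y => aux_memY_weight_pos hWpos y.2
  refine ⟨?_, ?_, ?_⟩
  · -- Part 1: union of supports consists of RL strings
    intro x hx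
    simp only [Set.mem_iUnion] at hx
    obtain ⟨k, hxk⟩ := hx
    rw [hX] at hxk
    obtain ⟨yv, -, rfl⟩ := hxk
    have hnil : [] ∉ List.ofFn fun i => ((yv i : List (ℝ × L))) := by
      intro h
      rw [List.mem_ofFn] at h
      obtain ⟨i, hi⟩ := h
      exact (yv i).2.1.1 hi
    refine ⟨?_, ?_, ?_⟩
    · rw [List.ofFn_succ, List.flatten_cons]
      intro hcon
      exact (yv 0).2.1.1 (List.append_eq_nil_iff.1 hcon).1
    · intro r hr
      rw [List.mem_flatten] at hr
      obtain ⟨l, hl, hrl⟩ := hr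
      rw [List.mem_ofFn] at hl
      obtain ⟨i, rfl⟩ := hl
      exact (yv i).2.1.2.1 r hrl
    · rw [show List.Chain' _ _ ↔ List.IsChain _ _ from Iff.rfl, List.isChain_flatten hnil]
      constructor
      · intro l hl
        rw [List.mem_ofFn] at hl
        obtain ⟨i, rfl⟩ := hl
        exact (yv i).2.1.2.2
      · apply List.Pairwise.isChain
        apply List.pairwise_of_forall_mem_list
        intro l₁ h₁ l₂ h₂
        rw [List.mem_ofFn] at h₁ h₂
        obtain ⟨i, rfl⟩ := h₁
        obtain ⟨j, rfl⟩ := h₂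
        intro p hp q hq
        have h1 := aux_memY_getLast? (yv i).2 p hp
        have h2 := aux_memY_head? (yv j).2 q hq
        rw [h2]; exact h1
  · -- Part 2: disjoint supports
    intro j k hj hk hjk
    have hcount : ∀ (m : ℕ) (x : List (ℝ × L)), x ∈ X m →
        x.countP (fun r => decide (r.2 = l₀)) = m := by
      intro m x hx
      rw [hX] at hx
      obtain ⟨yv, -, rfl⟩ := hx
      rw [List.countP_flatten, List.map_ofFn]
      have h1 : ∀ i : Fin m,
          ((yv i : List (ℝ × L))).countP (fun r => decide (r.2 = l₀)) = 1 := by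
        intro i
        obtain ⟨-, r, rest, ha, hr, -, hall⟩ := (yv i).2
        rw [ha, List.countP_cons]
        have h0 : rest.countP (fun r => decide (r.2 = l₀)) = 0 :=
          List.countP_eq_zero.2 fun q hq => by simpa using hall q hq
        simp [h0, hr]
      have heq : (List.ofFn ((List.countP fun r : ℝ × L => decide (r.2 = l₀)) ∘
          fun i : Fin m => ((yv i : List (ℝ × L)))))
          = List.ofFn fun _ : Fin m => 1 := by
        congr 1; funext i; exact h1 i
      rw [heq, List.sum_ofFn]
      simp
    rw [Set.eq_empty_iff_forall_notMem]
    rintro x ⟨hxj, hxk⟩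
    exact hjk ((hcount j x hxj).symm.trans (hcount k x hxk))
  · -- Part 3: entropy rate
    -- a distinguished element of 𝒴
    obtain ⟨ν, hν⟩ := hWne
    obtain ⟨l₁, hl₁⟩ := Fintype.exists_ne_of_one_lt_card (lt_of_lt_of_le one_lt_two hL) l₀
    have hy₀mem : MemY W l₀ [(ν, l₀), (ν, l₁)] := by
      refine ⟨⟨by simp, ?_, ?_⟩, (ν, l₀), [(ν, l₁)], rfl, rfl, by simp, ?_⟩
      · intro r hr
        rcases (by simpa using hr : r = (ν, l₀) ∨ r = (ν, l₁)) with rfl | rfl <;> exact hν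
      · exact List.isChain_cons_cons.2 ⟨Ne.symm hl₁, List.isChain_singleton _⟩
      · intro q hq
        rcases (by simpa using hq : q = (ν, l₁)) with rfl
        exact hl₁
    set y₀ : {a : List (ℝ × L) // MemY W l₀ a} := ⟨[(ν, l₀), (ν, l₁)], hy₀mem⟩ with hy₀def
    -- GW W C is finite
    have hGne : GW W C ≠ ⊤ := by
      intro hG
      rw [hG, ENNReal.mul_top] at hCeq
      · exact ENNReal.top_ne_one hCeq
      · rw [Ne, tsub_eq_zero_iff_le, not_le]
        exact_mod_cast lt_of_lt_of_le one_lt_two hL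
    -- hence exp(-ν C) is summable over W
    have hsumW : Summable fun ν : W => Real.exp (-(ν : ℝ) * C) := by
      have h1 := ENNReal.summable_toReal (by exact hGne)
      exact h1.congr fun ν => ENNReal.toReal_ofReal (Real.exp_pos _).le
    -- the small elements of W form a finite set
    have hFs : {t : ℝ | t ∈ W ∧ t < 1}.Finite := by
      have hten : Tendsto (fun ν : W => Real.exp (-(ν : ℝ) * C)) cofinite (nhds 0) :=
        hsumW.tendsto_cofinite_zero
      have hfin' : {ν : W | Real.exp (-C) ≤ Real.exp (-(ν : ℝ) * C)}.Finite := by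
        have hmem : Set.Iio (Real.exp (-C)) ∈ nhds (0 : ℝ) :=
          Iio_mem_nhds (Real.exp_pos _)
        have h2 := hten hmem
        rw [Filter.mem_map, Filter.mem_cofinite] at h2
        refine h2.subset ?_
        intro ν hν
        simp only [Set.mem_compl_iff, Set.mem_preimage, Set.mem_Iio, not_lt]
        exact hν
      have hsub : {t : ℝ | t ∈ W ∧ t < 1} ⊆
          Subtype.val '' {ν : W | Real.exp (-C) ≤ Real.exp (-(ν : ℝ) * C)} := by
        rintro t ⟨htW, ht1⟩
        refine ⟨⟨t, htW⟩, ?_, rfl⟩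
        have := hWpos t htW
        apply Real.exp_le_exp.2
        nlinarith
      exact (hfin'.image _).subset hsub
    -- a positive lower bound for small elements of W
    obtain ⟨δ, hδpos, hδle⟩ : ∃ δ : ℝ, 0 < δ ∧ ∀ t ∈ W, t < 1 → δ ≤ t := by
      rcases Set.eq_empty_or_nonempty {t : ℝ | t ∈ W ∧ t < 1} with hF | hF
      · refine ⟨1, one_pos, fun t htW ht1 =>
          absurd ⟨htW, ht1⟩ (Set.eq_empty_iff_forall_notMem.1 hF t)⟩
      · obtain ⟨δ, hδmem, hδmin⟩ := Set.exists_min_image _ id hFs hF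
        exact ⟨δ, hWpos δ hδmem.1, fun t htW ht1 => hδmin t ⟨htW, ht1⟩⟩
    -- the strings in 𝒴 of weight < 1 form a finite set
    have hYs : {y : {a : List (ℝ × L) // MemY W l₀ a} |
        rlWeight (y : List (ℝ × L)) < 1}.Finite := by
      have hs : ({t : ℝ | t ∈ W ∧ t < 1} ×ˢ (Set.univ : Set L)).Finite :=
        hFs.prod Set.finite_univ
      haveI := hs.to_subtype
      have h𝒮 : {a : List (ℝ × L) | (∀ r ∈ a, r ∈ {t : ℝ | t ∈ W ∧ t < 1} ×ˢ
          (Set.univ : Set L)) ∧ a.length ≤ ⌈1 / δ⌉₊}.Finite := by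
        have himg : {a : List (ℝ × L) | (∀ r ∈ a, r ∈ {t : ℝ | t ∈ W ∧ t < 1} ×ˢ
            (Set.univ : Set L)) ∧ a.length ≤ ⌈1 / δ⌉₊} ⊆
            (fun l : List ({t : ℝ | t ∈ W ∧ t < 1} ×ˢ (Set.univ : Set L) : Set (ℝ × L)) =>
              l.map Subtype.val) ''
            {l | l.length ≤ ⌈1 / δ⌉₊} := by
          rintro a ⟨hmem, hlen⟩
          refine ⟨a.attach.map fun x => ⟨x.1, hmem x.1 x.2⟩, ?_, ?_⟩
          · simpa using hlen
          · show List.map Subtype.val (List.map (fun x : {x // x ∈ a} =>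
                (⟨x.1, hmem x.1 x.2⟩ : ({t : ℝ | t ∈ W ∧ t < 1} ×ˢ
                  (Set.univ : Set L) : Set (ℝ × L)))) a.attach) = a
            rw [List.map_map]
            exact List.attach_map_subtype_val a
        exact ((List.finite_length_le _ _).image _).subset himg
      have hsub : Subtype.val '' {y : {a : List (ℝ × L) // MemY W l₀ a} |
          rlWeight (y : List (ℝ × L)) < 1} ⊆
          {a : List (ℝ × L) | (∀ r ∈ a, r ∈ {t : ℝ | t ∈ W ∧ t < 1} ×ˢ
            (Set.univ : Set L)) ∧ a.length ≤ ⌈1 / δ⌉₊} := by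
        rintro a ⟨y, hy, rfl⟩
        have hw1 : rlWeight (y : List (ℝ × L)) < 1 := hy
        have hmem : ∀ r ∈ (y : List (ℝ × L)),
            r ∈ {t : ℝ | t ∈ W ∧ t < 1} ×ˢ (Set.univ : Set L) := by
          intro r hr
          have hrW : r.1 ∈ W := y.2.1.2.1 r hr
          have hle := aux_memY_mem_le_weight hWpos y.2 r hr
          exact ⟨⟨hrW, lt_of_le_of_lt hle hw1⟩, trivial⟩
        refine ⟨hmem, ?_⟩
        have hδ : ∀ v ∈ (y : List (ℝ × L)).map Prod.fst, δ ≤ v := by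
          intro v hv
          rw [List.mem_map] at hv
          obtain ⟨r, hr, rfl⟩ := hv
          exact hδle r.1 (hmem r hr).1.1 (hmem r hr).1.2
        have hcard := List.card_nsmul_le_sum ((y : List (ℝ × L)).map Prod.fst) δ hδ
        rw [List.length_map] at hcard
        have hlen : ((y : List (ℝ × L)).length : ℝ) * δ ≤ rlWeight (y : List (ℝ × L)) := by
          rw [rlWeight]
          simpa [nsmul_eq_mul] using hcard
        have hlen2 : ((y : List (ℝ × L)).length : ℝ) ≤ 1 / δ := by
          rw [le_div_iff₀ hδpos]
          exact hlen.trans hw1.le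
        exact_mod_cast hlen2.trans (Nat.le_ceil _)
      exact Set.Finite.of_finite_image (h𝒮.subset hsub) Subtype.val_injective.injOn
    -- summability of pY and of pY·w
    have hT : Summable fun y : {a : List (ℝ × L) // MemY W l₀ a} =>
        pY y * rlWeight (y : List (ℝ × L)) :=
      hfin.congr fun y => by rw [hpY]
    have hS : Summable pY := by
      rw [← Set.Finite.summable_compl_iff hYs]
      have key : Summable fun y : ↥({y : {a : List (ℝ × L) // MemY W l₀ a} |
          rlWeight (y : List (ℝ × L)) < 1}ᶜ) =>
          pY (y : {a : List (ℝ × L) // MemY W l₀ a}) *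
            rlWeight ((y : {a : List (ℝ × L) // MemY W l₀ a}) : List (ℝ × L)) :=
        hT.subtype _
      refine Summable.of_nonneg_of_le (fun y => (hpos _).le) ?_ key
      intro y
      have h1 : (1 : ℝ) ≤ rlWeight ((y : {a : List (ℝ × L) // MemY W l₀ a})
          : List (ℝ × L)) := not_lt.1 y.2
      show pY (y : {a : List (ℝ × L) // MemY W l₀ a}) ≤ _
      nlinarith [hpos (y : {a : List (ℝ × L) // MemY W l₀ a})]
    have hq : Summable fun y : {a : List (ℝ × L) // MemY W l₀ a} =>
        pY y * (1 + rlWeight (y : List (ℝ × L))) :=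
      (hS.add hT).congr fun y => by ring
    -- the denominator function is summable for each n
    have hden : ∀ n : ℕ, Summable fun yv : Fin n → {a : List (ℝ × L) // MemY W l₀ a} =>
        (∏ i, pY (yv i)) * ∑ i, rlWeight ((yv i : List (ℝ × L))) :=
      fun n => aux_summable_prod_mul_sum hpos hwpos hq n
    -- the denominator is positive for each k
    have hdenpos : ∀ k : ℕ, 0 < ∑' yv : Fin (k + 1) → {a : List (ℝ × L) // MemY W l₀ a},
        (∏ i, pY (yv i)) * ∑ i, rlWeight ((yv i : List (ℝ × L))) := by
      intro k
      apply Summable.tsum_pos (hden (k + 1))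
        (fun yv => mul_nonneg (Finset.prod_nonneg fun i _ => (hpos _).le)
          (Finset.sum_nonneg fun i _ => (hwpos _).le)) (fun _ => y₀)
      apply mul_pos
      · exact Finset.prod_pos fun i _ => hpos y₀
      · exact Finset.sum_pos (fun i _ => hwpos y₀) Finset.univ_nonempty
    -- the pointwise identity between entropy summand and weight summand
    have hterm : ∀ (n : ℕ) (yv : Fin n → {a : List (ℝ × L) // MemY W l₀ a}),
        -((∏ i, pY (yv i)) * Real.log (∏ i, pY (yv i)))
          = C * ((∏ i, pY (yv i)) * ∑ i, rlWeight ((yv i : List (ℝ × L)))) := by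
      intro n yv
      have hlog : Real.log (∏ i, pY (yv i))
          = ∑ i, (-rlWeight ((yv i : List (ℝ × L))) * C) := by
        rw [Real.log_prod fun i _ => (hpos _).ne']
        exact Finset.sum_congr rfl fun i _ => by rw [hpY, Real.log_exp]
      rw [hlog]
      have h2 : ∑ i, (-rlWeight ((yv i : List (ℝ × L))) * C)
          = -(∑ i, rlWeight ((yv i : List (ℝ × L)))) * C := by
        rw [← Finset.sum_mul, ← Finset.sum_neg_distrib]
      rw [h2]; ring
    -- the ratio equals C for every k
    have hval : ∀ k : ℕ,
        (∑' yv : Fin (k + 1) → {a : List (ℝ × L) // MemY W l₀ a},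
          -((∏ i, pY (yv i)) * Real.log (∏ i, pY (yv i)))) /
        (∑' yv : Fin (k + 1) → {a : List (ℝ × L) // MemY W l₀ a},
          (∏ i, pY (yv i)) * ∑ i, rlWeight ((yv i : List (ℝ × L)))) = C := by
      intro k
      have hnum : (∑' yv : Fin (k + 1) → {a : List (ℝ × L) // MemY W l₀ a},
          -((∏ i, pY (yv i)) * Real.log (∏ i, pY (yv i))))
          = C * ∑' yv : Fin (k + 1) → {a : List (ℝ × L) // MemY W l₀ a},
            (∏ i, pY (yv i)) * ∑ i, rlWeight ((yv i : List (ℝ × L))) := by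
        rw [← tsum_mul_left]
        exact tsum_congr fun yv => hterm (k + 1) yv
      rw [hnum, mul_div_assoc, div_self (hdenpos k).ne', mul_one]
    have hfun : (fun k : ℕ =>
        (∑' yv : Fin (k + 1) → {a : List (ℝ × L) // MemY W l₀ a},
          -((∏ i, pY (yv i)) * Real.log (∏ i, pY (yv i)))) /
        (∑' yv : Fin (k + 1) → {a : List (ℝ × L) // MemY W l₀ a},
          (∏ i, pY (yv i)) * ∑ i, rlWeight ((yv i : List (ℝ × L)))))
        = fun _ : ℕ => C := funext hval
    rw [hfun]
    exact limsup_const C
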